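/- Let aggregate demand decompose as x(p,w) = x^m(p, w^m(p,w)) + x^f(p, w − w^m(p,w)) with all functions differentiable. Then the household pseudo-Slutsky matrix S̄(p,w) = ∂x/∂pᵀ + (∂x/∂w)xᵀ satisfies S̄ = S̄^m + S̄^f + U Vᵀ, where S̄^m and S̄^f are the individual pseudo-Slutsky matrices evaluated at (p, w^m) and (p, w − w^m), U = ∂x^m/∂w^m − ∂x^f/∂(w−w^m), and Vᵀ = ∂w^m/∂pᵀ + (∂w^m/∂w)(x^f)ᵀ − (1 − ∂w^m/∂w)(x^m)ᵀ. In particular, S̄ differs from the symmetric-candidate sum S̄^m + S̄^f by a matrix of rank at most one. -/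

import Mathlib

noncomputable section

/-- Price-derivative matrix of a demand function at `(p, w)`. -/
def priceDeriv {L : ℕ} (x : (Fin L → ℝ) → ℝ → (Fin L → ℝ))
    (p : Fin L → ℝ) (w : ℝ) : Matrix (Fin L) (Fin L) ℝ :=
  fun i j => fderiv ℝ (fun q => x q w i) p (Pi.single j 1)

/-- Income derivative of a demand function at `(p, w)`. -/
def incomeDeriv {L : ℕ} (x : (Fin L → ℝ) → ℝ → (Fin L → ℝ))
    (p : Fin L → ℝ) (w : ℝ) : Fin L → ℝ :=
  fun i => deriv (fun m => x p m i) w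

/-- The (pseudo-)Slutsky matrix `S = ∂x/∂pᵀ + (∂x/∂w)·xᵀ`. -/
def slutsky {L : ℕ} (x : (Fin L → ℝ) → ℝ → (Fin L → ℝ))
    (p : Fin L → ℝ) (w : ℝ) : Matrix (Fin L) (Fin L) ℝ :=
  fun i j => priceDeriv x p w i j + incomeDeriv x p w i * x p w j

/-- Price gradient of a scalar function of `(p, w)`. -/
def priceGrad {L : ℕ} (f : (Fin L → ℝ) → ℝ → ℝ)
    (p : Fin L → ℝ) (w : ℝ) : Fin L → ℝ :=
  fun j => fderiv ℝ (fun q => f q w) p (Pi.single j 1)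

/-- Income derivative of a scalar function of `(p, w)`. -/
def incomeGrad {L : ℕ} (f : (Fin L → ℝ) → ℝ → ℝ)
    (p : Fin L → ℝ) (w : ℝ) : ℝ :=
  deriv (fun m => f p m) w

lemma clm_split {L : ℕ} (T : ((Fin L → ℝ) × ℝ) →L[ℝ] ℝ) (v : Fin L → ℝ) (s : ℝ) :
    T (v, s) = T (v, 0) + s * T (0, 1) := by
  have h : (v, s) = (v, (0:ℝ)) + s • ((0 : Fin L → ℝ), (1:ℝ)) := by
    simp [Prod.ext_iff]
  rw [h, map_add, map_smul, smul_eq_mul]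

lemma pd_price {L : ℕ} (F : ((Fin L → ℝ) × ℝ) → ℝ) (p : Fin L → ℝ) (c : ℝ)
    (hF : DifferentiableAt ℝ F (p, c)) (v : Fin L → ℝ) :
    fderiv ℝ (fun q => F (q, c)) p v = fderiv ℝ F (p, c) (v, 0) := by
  have h1 : HasFDerivAt (fun q : Fin L → ℝ => (q, c))
      ((ContinuousLinearMap.id ℝ (Fin L → ℝ)).prod 0) p :=
    (hasFDerivAt_id p).prodMk (hasFDerivAt_const c p)
  have h2 : HasFDerivAt (fun q => F (q, c))
      ((fderiv ℝ F (p, c)).comp ((ContinuousLinearMap.id ℝ (Fin L → ℝ)).prod 0)) p :=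
    hF.hasFDerivAt.comp p h1
  rw [h2.fderiv]
  rfl

lemma pd_income {L : ℕ} (F : ((Fin L → ℝ) × ℝ) → ℝ) (p : Fin L → ℝ) (c : ℝ)
    (hF : DifferentiableAt ℝ F (p, c)) :
    deriv (fun m => F (p, m)) c = fderiv ℝ F (p, c) (0, 1) := by
  have h1 : HasFDerivAt (fun m : ℝ => (p, m))
      ((0 : ℝ →L[ℝ] (Fin L → ℝ)).prod (ContinuousLinearMap.id ℝ ℝ)) c :=
    (hasFDerivAt_const p c).prodMk (hasFDerivAt_id c)
  have h2 : HasFDerivAt (fun m => F (p, m))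
      ((fderiv ℝ F (p, c)).comp ((0 : ℝ →L[ℝ] (Fin L → ℝ)).prod (ContinuousLinearMap.id ℝ ℝ))) c :=
    hF.hasFDerivAt.comp c h1
  rw [h2.hasDerivAt.deriv]
  simp


/-- for `x(p,w) = x^m(p, w^m(p,w)) + x^f(p, w − w^m(p,w))` with
everything differentiable, the household pseudo-Slutsky matrix decomposes as
`S̄ = S̄^m + S̄^f + U Vᵀ`; in particular `S̄ − (S̄^m + S̄^f)` has rank at most
one. -/
theorem slutsky_decomposition {L : ℕ}
    (x xm xf : (Fin L → ℝ) → ℝ → (Fin L → ℝ))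
    (wm : (Fin L → ℝ) → ℝ → ℝ)
    (hdm : ∀ i, Differentiable ℝ (fun z : (Fin L → ℝ) × ℝ => xm z.1 z.2 i))
    (hdf : ∀ i, Differentiable ℝ (fun z : (Fin L → ℝ) × ℝ => xf z.1 z.2 i))
    (hdw : Differentiable ℝ (fun z : (Fin L → ℝ) × ℝ => wm z.1 z.2))
    (hx : ∀ p w, x p w = xm p (wm p w) + xf p (w - wm p w))
    (p : Fin L → ℝ) (w : ℝ) :
    (∀ i j, slutsky x p w i j =
      slutsky xm p (wm p w) i j + slutsky xf p (w - wm p w) i j +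
      (incomeDeriv xm p (wm p w) i - incomeDeriv xf p (w - wm p w) i) *
        (priceGrad wm p w j + incomeGrad wm p w * xf p (w - wm p w) j -
          (1 - incomeGrad wm p w) * xm p (wm p w) j)) ∧
    Matrix.rank
      (slutsky x p w - slutsky xm p (wm p w) - slutsky xf p (w - wm p w))
        ≤ 1 := by
  classical
  set c := wm p w with hc
  set d := w - wm p w with hd
  set Wd := fderiv ℝ (fun z : (Fin L → ℝ) × ℝ => wm z.1 z.2) (p, w) with hWdef
  have key : ∀ i j, slutsky x p w i j =
      slutsky xm p c i j + slutsky xf p d i j +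
      (incomeDeriv xm p c i - incomeDeriv xf p d i) *
        (priceGrad wm p w j + incomeGrad wm p w * xf p d j -
          (1 - incomeGrad wm p w) * xm p c j) := by
    intro i j
    set e : (Fin L → ℝ) := Pi.single j 1 with he
    set Fd := fderiv ℝ (fun z : (Fin L → ℝ) × ℝ => xm z.1 z.2 i) (p, c) with hFdef
    set Gd := fderiv ℝ (fun z : (Fin L → ℝ) × ℝ => xf z.1 z.2 i) (p, d) with hGdef
    -- individual partial derivatives
    have hFp : priceDeriv xm p c i j = Fd (e, 0) :=
      pd_price (fun z : (Fin L → ℝ) × ℝ => xm z.1 z.2 i) p c ((hdm i) (p, c)) e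
    have hGp : priceDeriv xf p d i j = Gd (e, 0) :=
      pd_price (fun z : (Fin L → ℝ) × ℝ => xf z.1 z.2 i) p d ((hdf i) (p, d)) e
    have hFm : incomeDeriv xm p c i = Fd (0, 1) :=
      pd_income (fun z : (Fin L → ℝ) × ℝ => xm z.1 z.2 i) p c ((hdm i) (p, c))
    have hGm : incomeDeriv xf p d i = Gd (0, 1) :=
      pd_income (fun z : (Fin L → ℝ) × ℝ => xf z.1 z.2 i) p d ((hdf i) (p, d))
    have hWp0 : priceGrad wm p w j = Wd (e, 0) :=
      pd_price (fun z : (Fin L → ℝ) × ℝ => wm z.1 z.2) p w (hdw (p, w)) e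
    have hWm0 : incomeGrad wm p w = Wd (0, 1) :=
      pd_income (fun z : (Fin L → ℝ) × ℝ => wm z.1 z.2) p w (hdw (p, w))
    -- chain rule in price direction
    have hqw : HasFDerivAt (fun q : (Fin L → ℝ) => (q, w))
        ((ContinuousLinearMap.id ℝ (Fin L → ℝ)).prod 0) p :=
      (hasFDerivAt_id p).prodMk (hasFDerivAt_const w p)
    have hWp : HasFDerivAt (fun q : (Fin L → ℝ) => wm q w)
        (Wd.comp ((ContinuousLinearMap.id ℝ (Fin L → ℝ)).prod 0)) p :=
      (hdw (p, w)).hasFDerivAt.comp (g := fun z : (Fin L → ℝ) × ℝ => wm z.1 z.2) p hqw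
    have hpair1 : HasFDerivAt (fun q : (Fin L → ℝ) => (q, wm q w))
        ((ContinuousLinearMap.id ℝ (Fin L → ℝ)).prod (Wd.comp ((ContinuousLinearMap.id ℝ (Fin L → ℝ)).prod 0))) p :=
      (hasFDerivAt_id p).prodMk hWp
    have hpair2 : HasFDerivAt (fun q : (Fin L → ℝ) => (q, w - wm q w))
        ((ContinuousLinearMap.id ℝ (Fin L → ℝ)).prod
          ((0 : (Fin L → ℝ) →L[ℝ] ℝ) - Wd.comp ((ContinuousLinearMap.id ℝ (Fin L → ℝ)).prod 0))) p :=
      (hasFDerivAt_id p).prodMk ((hasFDerivAt_const w p).sub hWp)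
    have hF1 : HasFDerivAt (fun q : (Fin L → ℝ) => xm q (wm q w) i)
        (Fd.comp ((ContinuousLinearMap.id ℝ (Fin L → ℝ)).prod
          (Wd.comp ((ContinuousLinearMap.id ℝ (Fin L → ℝ)).prod 0)))) p :=
      ((hdm i) (p, c)).hasFDerivAt.comp (g := fun z : (Fin L → ℝ) × ℝ => xm z.1 z.2 i) p hpair1
    have hG1 : HasFDerivAt (fun q : (Fin L → ℝ) => xf q (w - wm q w) i)
        (Gd.comp ((ContinuousLinearMap.id ℝ (Fin L → ℝ)).prod
          ((0 : (Fin L → ℝ) →L[ℝ] ℝ) - Wd.comp ((ContinuousLinearMap.id ℝ (Fin L → ℝ)).prod 0)))) p :=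
      ((hdf i) (p, d)).hasFDerivAt.comp (g := fun z : (Fin L → ℝ) × ℝ => xf z.1 z.2 i) p hpair2
    have hfun1 : (fun q : (Fin L → ℝ) => x q w i)
        = fun q : (Fin L → ℝ) => xm q (wm q w) i + xf q (w - wm q w) i := by
      funext q; rw [hx q w]; rfl
    have hP : priceDeriv x p w i j = Fd (e, Wd (e, 0)) + Gd (e, -(Wd (e, 0))) := by
      show fderiv ℝ (fun q : (Fin L → ℝ) => x q w i) p e = _
      rw [hfun1, (show HasFDerivAt (fun q : (Fin L → ℝ) => xm q (wm q w) i + xf q (w - wm q w) i) _ p from hF1.add hG1).fderiv]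
      simp
    -- chain rule in income direction
    have hqm : HasFDerivAt (fun m : ℝ => (p, m))
        ((0 : ℝ →L[ℝ] (Fin L → ℝ)).prod (ContinuousLinearMap.id ℝ ℝ)) w :=
      (hasFDerivAt_const p w).prodMk (hasFDerivAt_id w)
    have hWm' : HasFDerivAt (fun m : ℝ => wm p m)
        (Wd.comp ((0 : ℝ →L[ℝ] (Fin L → ℝ)).prod (ContinuousLinearMap.id ℝ ℝ))) w :=
      (hdw (p, w)).hasFDerivAt.comp (g := fun z : (Fin L → ℝ) × ℝ => wm z.1 z.2) w hqm
    have hpair3 : HasFDerivAt (fun m : ℝ => (p, wm p m))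
        ((0 : ℝ →L[ℝ] (Fin L → ℝ)).prod
          (Wd.comp ((0 : ℝ →L[ℝ] (Fin L → ℝ)).prod (ContinuousLinearMap.id ℝ ℝ)))) w :=
      (hasFDerivAt_const p w).prodMk hWm'
    have hpair4 : HasFDerivAt (fun m : ℝ => (p, m - wm p m))
        ((0 : ℝ →L[ℝ] (Fin L → ℝ)).prod
          (ContinuousLinearMap.id ℝ ℝ -
            Wd.comp ((0 : ℝ →L[ℝ] (Fin L → ℝ)).prod (ContinuousLinearMap.id ℝ ℝ)))) w :=
      (hasFDerivAt_const p w).prodMk ((hasFDerivAt_id w).sub hWm')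
    have hF2 : HasFDerivAt (fun m : ℝ => xm p (wm p m) i)
        (Fd.comp ((0 : ℝ →L[ℝ] (Fin L → ℝ)).prod
          (Wd.comp ((0 : ℝ →L[ℝ] (Fin L → ℝ)).prod (ContinuousLinearMap.id ℝ ℝ))))) w :=
      ((hdm i) (p, c)).hasFDerivAt.comp (g := fun z : (Fin L → ℝ) × ℝ => xm z.1 z.2 i) w hpair3
    have hG2 : HasFDerivAt (fun m : ℝ => xf p (m - wm p m) i)
        (Gd.comp ((0 : ℝ →L[ℝ] (Fin L → ℝ)).prod
          (ContinuousLinearMap.id ℝ ℝ -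
            Wd.comp ((0 : ℝ →L[ℝ] (Fin L → ℝ)).prod (ContinuousLinearMap.id ℝ ℝ))))) w :=
      ((hdf i) (p, d)).hasFDerivAt.comp (g := fun z : (Fin L → ℝ) × ℝ => xf z.1 z.2 i) w hpair4
    have hfun2 : (fun m : ℝ => x p m i)
        = fun m : ℝ => xm p (wm p m) i + xf p (m - wm p m) i := by
      funext m; rw [hx p m]; rfl
    have hI : incomeDeriv x p w i = Fd (0, Wd (0, 1)) + Gd (0, 1 - Wd (0, 1)) := by
      show deriv (fun m : ℝ => x p m i) w = _
      rw [hfun2, ((show HasFDerivAt (fun m : ℝ => xm p (wm p m) i + xf p (m - wm p m) i) _ w from hF2.add hG2).hasDerivAt).deriv]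
      simp
    have hxval : x p w j = xm p c j + xf p d j := by rw [hx p w]; rfl
    have s1 : Fd (e, Wd (e, 0)) = Fd (e, 0) + Wd (e, 0) * Fd (0, 1) := clm_split Fd e _
    have s2 : Gd (e, -(Wd (e, 0))) = Gd (e, 0) + (-(Wd (e, 0))) * Gd (0, 1) := clm_split Gd e _
    have s3 : Fd (0, Wd (0, 1)) = Fd (0, 0) + Wd (0, 1) * Fd (0, 1) := clm_split Fd 0 _
    have s4 : Gd (0, 1 - Wd (0, 1)) = Gd (0, 0) + (1 - Wd (0, 1)) * Gd (0, 1) := clm_split Gd 0 _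
    have z1 : Fd (0, 0) = 0 := by
      have : ((0 : (Fin L → ℝ)), (0 : ℝ)) = (0 : (Fin L → ℝ) × ℝ) := rfl
      rw [this, map_zero]
    have z2 : Gd (0, 0) = 0 := by
      have : ((0 : (Fin L → ℝ)), (0 : ℝ)) = (0 : (Fin L → ℝ) × ℝ) := rfl
      rw [this, map_zero]
    simp only [slutsky]
    rw [hP, hI, hFp, hGp, hFm, hGm, hWp0, hWm0, hxval, s1, s2, s3, s4, z1, z2]
    ring
  refine ⟨key, ?_⟩
  have hM : slutsky x p w - slutsky xm p c - slutsky xf p d =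
      Matrix.vecMulVec
        (fun i => incomeDeriv xm p c i - incomeDeriv xf p d i)
        (fun j => priceGrad wm p w j + incomeGrad wm p w * xf p d j -
          (1 - incomeGrad wm p w) * xm p c j) := by
    ext i j
    simp only [Matrix.sub_apply, Matrix.vecMulVec_apply]
    rw [key i j]; ring
  rw [hM, Matrix.vecMulVec_eq (Fin 1)]
  exact (Matrix.rank_mul_le_right _ _).trans
    ((Matrix.rank_le_card_height _).trans (by simp))
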